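/- Let (X̂, f̂, μ̂) be an invertible ergodic measure-preserving system, ε > 0, and u : X̂ → (0,∞) measurable with log u integrable. Then there exists a measurable function V : X̂ → (0,1] that is ε-slow (i.e., there is a measurable S̃ : X̂ → (0,1] with V(f̂^q(x̂)) ≥ e^{-qε} S̃(x̂) for μ̂-a.e. x̂ and all q ≥ 1) such that for μ̂-a.e. x̂ and all n ≥ 0, u(f̂^{-n}(x̂)) ≥ V(x̂) e^{-nε}. -/

import Mathlib

open MeasureTheory Finset Filter
open scoped ENNReal

/-- Chebyshev-type summability: for an integrable `h`, the measures of the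
superlevel sets `{(n+1)c ≤ |h|}` are summable. -/
private lemma tsum_meas_abs_ge_ne_top {X : Type*} [MeasurableSpace X]
    (μ : Measure X) [IsProbabilityMeasure μ] {h : X → ℝ} (hm : Measurable h)
    (hh : Integrable h μ) {c : ℝ} (hc : 0 < c) :
    ∑' n : ℕ, μ {x | ((n : ℝ) + 1) * c ≤ |h x|} ≠ ∞ := by
  have hSmeas : ∀ n : ℕ, MeasurableSet {x | ((n : ℝ) + 1) * c ≤ |h x|} := fun n =>
    measurableSet_le measurable_const hm.abs
  have key : ∑' n : ℕ, μ {x | ((n : ℝ) + 1) * c ≤ |h x|}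
      ≤ ∫⁻ x, ENNReal.ofReal (|h x| / c) ∂μ := by
    have h1 : ∀ n : ℕ, μ {x | ((n : ℝ) + 1) * c ≤ |h x|}
        = ∫⁻ x, ({x | ((n : ℝ) + 1) * c ≤ |h x|}).indicator (fun _ => (1 : ℝ≥0∞)) x ∂μ := by
      intro n
      exact (lintegral_indicator_one (hSmeas n)).symm
    calc ∑' n : ℕ, μ {x | ((n : ℝ) + 1) * c ≤ |h x|}
        = ∑' n : ℕ, ∫⁻ x, ({x | ((n : ℝ) + 1) * c ≤ |h x|}).indicator
            (fun _ => (1 : ℝ≥0∞)) x ∂μ := by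
          exact tsum_congr h1
      _ = ∫⁻ x, ∑' n : ℕ, ({x | ((n : ℝ) + 1) * c ≤ |h x|}).indicator
            (fun _ => (1 : ℝ≥0∞)) x ∂μ := by
          refine (lintegral_tsum fun n => ?_).symm
          exact ((measurable_one.indicator (hSmeas n))).aemeasurable
      _ ≤ ∫⁻ x, ENNReal.ofReal (|h x| / c) ∂μ := by
          refine lintegral_mono fun x => ?_
          set m : ℕ := ⌊|h x| / c⌋₊ with hm'
          have hzero : ∀ n : ℕ, n ∉ Finset.range m →
              ({x | ((n : ℝ) + 1) * c ≤ |h x|}).indicator (fun _ => (1 : ℝ≥0∞)) x = 0 := by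
            intro n hn
            rw [Finset.mem_range, not_lt] at hn
            apply Set.indicator_of_notMem
            intro hx
            have hx' : ((n : ℝ) + 1) ≤ |h x| / c := by
              rw [le_div_iff₀ hc]; exact hx
            have : (n + 1 : ℕ) ≤ m := Nat.le_floor (by push_cast; linarith)
            omega
          calc ∑' n : ℕ, ({x | ((n : ℝ) + 1) * c ≤ |h x|}).indicator
                (fun _ => (1 : ℝ≥0∞)) x
              = ∑ n ∈ Finset.range m, ({x | ((n : ℝ) + 1) * c ≤ |h x|}).indicator
                (fun _ => (1 : ℝ≥0∞)) x := tsum_eq_sum hzero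
            _ ≤ ∑ n ∈ Finset.range m, 1 := by
                refine Finset.sum_le_sum fun n _ => ?_
                by_cases hx : x ∈ {x | ((n : ℝ) + 1) * c ≤ |h x|} <;>
                  simp [Set.indicator, hx]
            _ = (m : ℝ≥0∞) := by simp
            _ ≤ ENNReal.ofReal (|h x| / c) := by
                rw [← ENNReal.ofReal_natCast]
                exact ENNReal.ofReal_le_ofReal
                  (Nat.floor_le (div_nonneg (abs_nonneg _) hc.le))
  refine ne_top_of_le_ne_top ?_ key
  have : ∫⁻ x, ENNReal.ofReal (|h x| / c) ∂μ
      = (∫⁻ x, ENNReal.ofReal |h x| ∂μ) * ENNReal.ofReal c⁻¹ := by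
    rw [← lintegral_mul_const _ hm.abs.ennreal_ofReal]
    refine lintegral_congr fun x => ?_
    rw [div_eq_mul_inv, ENNReal.ofReal_mul (abs_nonneg _)]
  rw [this]
  exact ENNReal.mul_ne_top hh.abs.lintegral_lt_top.ne ENNReal.ofReal_ne_top

/-- Along the orbit of a measure-preserving map, the infimum
`⨅ n, min 1 (u(T^n x) e^{nε})` is a.e. positive when `log u` is integrable. -/
private lemma ae_pos_iInf {X : Type*} [MeasurableSpace X]
    (μ : Measure X) [IsProbabilityMeasure μ]
    (T : X → X) (hT : MeasurePreserving T μ μ) {ε : ℝ} (hε : 0 < ε)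
    {u : X → ℝ} (hu : Measurable u) (hupos : ∀ x, 0 < u x)
    (hlog : Integrable (fun x => Real.log (u x)) μ) :
    ∀ᵐ x ∂μ, 0 < ⨅ n : ℕ, min 1 (u (T^[n] x) * Real.exp ((n : ℝ) * ε)) := by
  set h : X → ℝ := fun x => Real.log (u x) with hh
  have hm : Measurable h := hu.log
  set C : ℕ → Set X := fun n =>
    T^[n + 1] ⁻¹' {y | u y < Real.exp (-(((n : ℝ) + 1) * ε))} with hC
  have hlev : ∀ n : ℕ, MeasurableSet {y | u y < Real.exp (-(((n : ℝ) + 1) * ε))} := fun n =>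
    measurableSet_lt hu measurable_const
  have hsub : ∀ n : ℕ, {y | u y < Real.exp (-(((n : ℝ) + 1) * ε))}
      ⊆ {y | ((n : ℝ) + 1) * ε ≤ |h y|} := by
    intro n y hy
    simp only [Set.mem_setOf_eq] at hy ⊢
    have hlog_lt : h y < -(((n : ℝ) + 1) * ε) := by
      have := Real.log_lt_log (hupos y) hy
      rwa [Real.log_exp] at this
    refine le_abs.2 (Or.inr ?_)
    linarith
  have hsum : ∑' n : ℕ, μ (C n) ≠ ∞ := by
    refine ne_top_of_le_ne_top (tsum_meas_abs_ge_ne_top μ hm hlog hε) ?_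
    refine ENNReal.tsum_le_tsum fun n => ?_
    have := (hT.iterate (n + 1)).measure_preimage (hlev n).nullMeasurableSet
    rw [hC]
    simp only []
    rw [this]
    exact measure_mono (hsub n)
  have hBC : μ (limsup C atTop) = 0 := measure_limsup_atTop_eq_zero hsum
  have hae : ∀ᵐ x ∂μ, x ∉ limsup C atTop := measure_eq_zero_iff_ae_notMem.mp hBC
  filter_upwards [hae] with x hx
  rw [mem_limsup_iff_frequently_mem, not_frequently] at hx
  obtain ⟨N, hN⟩ := eventually_atTop.mp hx
  -- For all n ≥ N + 1, we have exp(-(n ε)) ≤ u(T^[n] x).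
  have hbig : ∀ n : ℕ, N + 1 ≤ n → Real.exp (-((n : ℝ) * ε)) ≤ u (T^[n] x) := by
    intro n hn
    obtain ⟨k, rfl⟩ : ∃ k, n = k + 1 := ⟨n - 1, by omega⟩
    have := hN k (by omega)
    simp only [hC, Set.mem_preimage, Set.mem_setOf_eq, not_lt] at this
    convert this using 3
    · rfl
    push_cast; ring
  -- terms are positive
  have hpos : ∀ n : ℕ, 0 < min 1 (u (T^[n] x) * Real.exp ((n : ℝ) * ε)) := fun n =>
    lt_min one_pos (mul_pos (hupos _) (Real.exp_pos _))
  have hne : (Finset.range (N + 1)).Nonempty := ⟨0, by simp⟩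
  set c : ℝ := (Finset.range (N + 1)).inf' hne
    (fun n => min 1 (u (T^[n] x) * Real.exp ((n : ℝ) * ε))) with hc
  have hcpos : 0 < c := by
    rw [hc, Finset.lt_inf'_iff]
    exact fun n _ => hpos n
  have hmin : 0 < min c 1 := lt_min hcpos one_pos
  refine lt_of_lt_of_le hmin (le_ciInf fun n => ?_)
  rcases le_or_gt n N with hle | hlt
  · exact (min_le_left c 1).trans
      (Finset.inf'_le _ (Finset.mem_range.mpr (by omega)))
  · refine (min_le_right c 1).trans (le_min le_rfl ?_)
    have h1 := hbig n (by omega)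
    have h2 : Real.exp (-((n : ℝ) * ε)) * Real.exp ((n : ℝ) * ε)
        ≤ u (T^[n] x) * Real.exp ((n : ℝ) * ε) :=
      mul_le_mul_of_nonneg_right h1 (Real.exp_pos _).le
    rwa [← Real.exp_add, neg_add_cancel, Real.exp_zero] at h2

/-- Along backward orbits, an a.e. positive function with integrable logarithm
is bounded below by `V(x) e^{-nε}` for an `ε`-slow function `V : X̂ → (0,1]`. -/
theorem stmt_2 {X : Type*} [MeasurableSpace X]
    (μ : Measure X) [IsProbabilityMeasure μ]
    (f g : X → X) (hf : MeasurePreserving f μ μ) (hg : MeasurePreserving g μ μ)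
    (hfg : ∀ x, f (g x) = x) (hgf : ∀ x, g (f x) = x)
    (herg : Ergodic f μ)
    (ε : ℝ) (hε : 0 < ε)
    (u : X → ℝ) (hu : Measurable u) (hupos : ∀ x, 0 < u x)
    (hlog : Integrable (fun x => Real.log (u x)) μ) :
    ∃ V : X → ℝ, Measurable V ∧ (∀ x, 0 < V x ∧ V x ≤ 1) ∧
      -- `V` is `ε`-slow:
      (∃ S : X → ℝ, Measurable S ∧ (∀ x, 0 < S x ∧ S x ≤ 1) ∧
        ∀ᵐ x ∂μ, ∀ q : ℕ, 1 ≤ q → Real.exp (-(q * ε)) * S x ≤ V (f^[q] x)) ∧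
      ∀ᵐ x ∂μ, ∀ n : ℕ, V x * Real.exp (-(n * ε)) ≤ u (g^[n] x) := by
  classical
  set V0 : X → ℝ := fun x => ⨅ n : ℕ, min 1 (u (g^[n] x) * Real.exp ((n : ℝ) * ε)) with hV0
  set W0 : X → ℝ := fun x => ⨅ n : ℕ, min 1 (u (f^[n] x) * Real.exp ((n : ℝ) * ε)) with hW0
  have hV0m : Measurable V0 :=
    Measurable.iInf fun n =>
      measurable_const.min ((hu.comp (hg.measurable.iterate n)).mul measurable_const)
  have hW0m : Measurable W0 :=
    Measurable.iInf fun n =>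
      measurable_const.min ((hu.comp (hf.measurable.iterate n)).mul measurable_const)
  have hbdd : ∀ (T : X → X) (x : X), BddBelow (Set.range fun n : ℕ =>
      min 1 (u (T^[n] x) * Real.exp ((n : ℝ) * ε))) := by
    intro T x
    refine ⟨0, ?_⟩
    rintro y ⟨n, rfl⟩
    exact le_min zero_le_one (mul_pos (hupos _) (Real.exp_pos _)).le
  -- pointwise upper bounds on the infima
  have hV0le : ∀ x (n : ℕ), V0 x ≤ min 1 (u (g^[n] x) * Real.exp ((n : ℝ) * ε)) :=
    fun x n => ciInf_le (hbdd g x) n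
  have hW0le : ∀ x (n : ℕ), W0 x ≤ min 1 (u (f^[n] x) * Real.exp ((n : ℝ) * ε)) :=
    fun x n => ciInf_le (hbdd f x) n
  have hV0le1 : ∀ x, V0 x ≤ 1 := fun x => (hV0le x 0).trans (min_le_left _ _)
  have hW0le1 : ∀ x, W0 x ≤ 1 := fun x => (hW0le x 0).trans (min_le_left _ _)
  have hV0nonneg : ∀ x, 0 ≤ V0 x := fun x =>
    le_ciInf fun n => le_min zero_le_one (mul_pos (hupos _) (Real.exp_pos _)).le
  have hW0nonneg : ∀ x, 0 ≤ W0 x := fun x =>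
    le_ciInf fun n => le_min zero_le_one (mul_pos (hupos _) (Real.exp_pos _)).le
  -- iterate cancellation
  have hgf' : Function.LeftInverse g f := hgf
  -- the key pointwise slowness inequality
  have key : ∀ (x : X) (q : ℕ),
      Real.exp (-((q : ℝ) * ε)) * min (V0 x) (W0 x) ≤ V0 (f^[q] x) := by
    intro x q
    refine le_ciInf fun n => ?_
    have hexp1 : Real.exp (-((q : ℝ) * ε)) ≤ 1 := by
      rw [Real.exp_le_one_iff]
      exact neg_nonpos.mpr (mul_nonneg (Nat.cast_nonneg q) hε.le)
    have hminnn : 0 ≤ min (V0 x) (W0 x) := le_min (hV0nonneg x) (hW0nonneg x)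
    rcases le_or_gt q n with hqn | hnq
    · -- n ≥ q : g^[n] (f^[q] x) = g^[n-q] x
      have hit : g^[n] (f^[q] x) = g^[n - q] x := by
        have : g^[n] = g^[n - q] ∘ g^[q] := by
          rw [← Function.iterate_add g, Nat.sub_add_cancel hqn]
        rw [this, Function.comp_apply, hgf'.iterate q]
      rw [hit]
      refine le_min ?_ ?_
      · calc Real.exp (-((q : ℝ) * ε)) * min (V0 x) (W0 x)
            ≤ 1 * 1 := mul_le_mul hexp1 ((min_le_left _ _).trans (hV0le1 x)) hminnn zero_le_one
          _ = 1 := one_mul 1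
      · calc Real.exp (-((q : ℝ) * ε)) * min (V0 x) (W0 x)
            ≤ 1 * V0 x := mul_le_mul hexp1 (min_le_left _ _) hminnn zero_le_one
          _ = V0 x := one_mul _
          _ ≤ min 1 (u (g^[n - q] x) * Real.exp (((n - q : ℕ) : ℝ) * ε)) := hV0le x (n - q)
          _ ≤ u (g^[n - q] x) * Real.exp (((n - q : ℕ) : ℝ) * ε) := min_le_right _ _
          _ ≤ u (g^[n - q] x) * Real.exp ((n : ℝ) * ε) := by
              refine mul_le_mul_of_nonneg_left (Real.exp_le_exp.mpr ?_) (hupos _).le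
              refine mul_le_mul_of_nonneg_right ?_ hε.le
              exact_mod_cast Nat.cast_le.mpr (Nat.sub_le n q)
    · -- n < q : g^[n] (f^[q] x) = f^[q-n] x
      set j : ℕ := q - n with hj
      have hit : g^[n] (f^[q] x) = f^[j] x := by
        have : f^[q] x = f^[n] (f^[j] x) := by
          have hnj : n + j = q := by omega
          rw [← Function.iterate_add_apply, hnj]
        rw [this, hgf'.iterate n]
      rw [hit]
      have hW : min (V0 x) (W0 x) ≤ min 1 (u (f^[j] x) * Real.exp ((j : ℝ) * ε)) :=
        (min_le_right _ _).trans (hW0le x j)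
      refine le_min ?_ ?_
      · calc Real.exp (-((q : ℝ) * ε)) * min (V0 x) (W0 x)
            ≤ 1 * 1 := mul_le_mul hexp1
              ((min_le_left _ _).trans (hV0le1 x)) hminnn zero_le_one
          _ = 1 := one_mul 1
      · calc Real.exp (-((q : ℝ) * ε)) * min (V0 x) (W0 x)
            ≤ Real.exp (-((q : ℝ) * ε)) * (u (f^[j] x) * Real.exp ((j : ℝ) * ε)) := by
              refine mul_le_mul_of_nonneg_left (hW.trans (min_le_right _ _)) (Real.exp_pos _).le
          _ = u (f^[j] x) * Real.exp (((j : ℝ) - q) * ε) := by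
              rw [mul_comm (Real.exp _), mul_assoc, ← Real.exp_add]
              congr 2
              ring
          _ ≤ u (f^[j] x) * Real.exp ((n : ℝ) * ε) := by
              refine mul_le_mul_of_nonneg_left (Real.exp_le_exp.mpr ?_) (hupos _).le
              have hjq : (j : ℝ) = (q : ℝ) - (n : ℝ) := by
                rw [hj]
                push_cast [Nat.cast_sub hnq.le]
                ring
              have : (j : ℝ) - q = -(n : ℝ) := by rw [hjq]; ring
              rw [this]
              nlinarith [Nat.cast_nonneg (α := ℝ) n]
  -- the a.e. positivity results
  have hVpos : ∀ᵐ x ∂μ, 0 < V0 x := ae_pos_iInf μ g hg hε hu hupos hlog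
  have hWpos : ∀ᵐ x ∂μ, 0 < W0 x := ae_pos_iInf μ f hf hε hu hupos hlog
  -- corrected (everywhere-positive) versions
  set V : X → ℝ := fun x => if 0 < V0 x then V0 x else 1 with hV
  set S : X → ℝ := fun x => if 0 < min (V0 x) (W0 x) then min (V0 x) (W0 x) else 1 with hS
  have hVm : Measurable V :=
    Measurable.ite (measurableSet_lt measurable_const hV0m) hV0m measurable_const
  have hSm : Measurable S :=
    Measurable.ite (measurableSet_lt measurable_const (hV0m.min hW0m))
      (hV0m.min hW0m) measurable_const
  have hVbnd : ∀ x, 0 < V x ∧ V x ≤ 1 := by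
    intro x
    simp only [hV]
    split_ifs with hx
    · exact ⟨hx, hV0le1 x⟩
    · exact ⟨one_pos, le_rfl⟩
  have hSbnd : ∀ x, 0 < S x ∧ S x ≤ 1 := by
    intro x
    simp only [hS]
    split_ifs with hx
    · exact ⟨hx, (min_le_left _ _).trans (hV0le1 x)⟩
    · exact ⟨one_pos, le_rfl⟩
  have hV0leV : ∀ x, V0 x ≤ V x := by
    intro x
    simp only [hV]
    split_ifs with hx
    · exact le_rfl
    · exact le_of_not_gt hx |>.trans zero_le_one
  refine ⟨V, hVm, hVbnd, ⟨S, hSm, hSbnd, ?_⟩, ?_⟩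
  · -- slowness
    filter_upwards [hVpos, hWpos] with x h1 h2
    intro q _
    have hmin : 0 < min (V0 x) (W0 x) := lt_min h1 h2
    have hSx : S x = min (V0 x) (W0 x) := by simp only [hS]; exact if_pos hmin
    calc Real.exp (-((q : ℝ) * ε)) * S x
        = Real.exp (-((q : ℝ) * ε)) * min (V0 x) (W0 x) := by rw [hSx]
      _ ≤ V0 (f^[q] x) := key x q
      _ ≤ V (f^[q] x) := hV0leV _
  · -- the main a.e. bound
    filter_upwards [hVpos] with x h1
    intro n
    have hVx : V x = V0 x := by simp only [hV]; exact if_pos h1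
    have hb : V0 x ≤ u (g^[n] x) * Real.exp ((n : ℝ) * ε) :=
      (hV0le x n).trans (min_le_right _ _)
    have h2 : V0 x * Real.exp (-((n : ℝ) * ε))
        ≤ u (g^[n] x) * Real.exp ((n : ℝ) * ε) * Real.exp (-((n : ℝ) * ε)) :=
      mul_le_mul_of_nonneg_right hb (Real.exp_pos _).le
    rw [mul_assoc, ← Real.exp_add, add_neg_cancel, Real.exp_zero, mul_one] at h2
    rw [hVx]
    exact h2
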